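/- Let λ̂₀, λ̂₁, λ̂₂, μ̂₁, μ̂₂ > 0, λ̂ = λ̂₀+λ̂₁+λ̂₂, ρ = λ̂/(μ̂₁+μ̂₂), and suppose the variable z satisfies z > 0 and (ξ₁(z)+ξ₂(z))² z = 4, where ξ₁(z) = [2(μ̂₁ z⁻¹ + λ̂₂) + λ̂₀]/(λ̂+μ̂₁+μ̂₂) and ξ₂(z) = [2(μ̂₂ z⁻¹ + λ̂₁) + λ̂₀]/(λ̂+μ̂₁+μ̂₂). Then z = 1 or z = ρ⁻². -/

import Mathlib

theorem quadratic_roots_one_and_rho_inv_sq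
    (lam0h lam1h lam2h mu1h mu2h lamh rho z : ℝ)
    (h0 : 0 < lam0h) (h1 : 0 < lam1h) (h2 : 0 < lam2h)
    (hm1 : 0 < mu1h) (hm2 : 0 < mu2h)
    (hlam : lamh = lam0h + lam1h + lam2h)
    (hrho : rho = lamh / (mu1h + mu2h))
    (hz : 0 < z)
    (heq : ((((2 * (mu1h * z⁻¹ + lam2h) + lam0h) / (lamh + mu1h + mu2h))
        + ((2 * (mu2h * z⁻¹ + lam1h) + lam0h) / (lamh + mu1h + mu2h))) ^ 2) * z = 4) :
    z = 1 ∨ z = rho⁻¹ ^ 2 := by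
  subst hlam hrho
  set L := lam0h + lam1h + lam2h with hL
  set M := mu1h + mu2h with hM
  have hLpos : 0 < L := by positivity
  have hMpos : 0 < M := by positivity
  have hS : L + M ≠ 0 := by positivity
  have hz' : z ≠ 0 := ne_of_gt hz
  have hfac : (z - 1) * (L ^ 2 * z - M ^ 2) = 0 := by
    field_simp at heq
    have h4 : z * (4 * ((z - 1) * (L ^ 2 * z - M ^ 2))) = 0 := by
      linear_combination z * heq
    have := (mul_eq_zero.mp h4).resolve_left hz'
    linarith
  rcases mul_eq_zero.mp hfac with h | h
  · left; linarith
  · right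
    have : z = M ^ 2 / L ^ 2 := by
      field_simp
      linarith
    rw [this]
    field_simp
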